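/- Let 𝒯 = (𝒳, π, 𝒮) be a hypergraph transformation and X ∈ 𝒳. Suppose X', X'' are hypergraphs with 𝒞(X') ⊆ 𝒞(X), V(X'') ∩ V(X ⊖ X') = ∅, and Y := (X ⊖ X') ⊕ X'' ∈ 𝒳. Suppose further that for every S ∈ 𝒮, S is component disjoint with both X' and X'', and π(S) is vertex disjoint with both X' and X''. Then 𝒟_Y = 𝒟_X and 𝒮_Y = 𝒮_X. -/

import Mathlib

open Classical

universe u

/-- A (finite) hypergraph over a vertex universe `V`: a finite vertex set together with a
finite set of nonempty hyperedges, each a subset of the vertex set. -/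
structure FinHypergraph (V : Type u) where
  verts : Set V
  edges : Set (Set V)
  verts_finite : verts.Finite
  edges_finite : edges.Finite
  edge_sub : ∀ e ∈ edges, e ⊆ verts
  edge_nonempty : ∀ e ∈ edges, e.Nonempty

namespace FinHypergraph

variable {V : Type u}

/-- The null hypergraph `𝒩`. -/
def Null : FinHypergraph V :=
  ⟨∅, ∅, Set.finite_empty, Set.finite_empty, by simp, by simp⟩

/-- Direct sum (hypergraph union) of two hypergraphs. -/
def dSum (X Y : FinHypergraph V) : FinHypergraph V where
  verts := X.verts ∪ Y.verts
  edges := X.edges ∪ Y.edges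
  verts_finite := X.verts_finite.union Y.verts_finite
  edges_finite := X.edges_finite.union Y.edges_finite
  edge_sub := by
    rintro e (he | he)
    · exact (X.edge_sub e he).trans Set.subset_union_left
    · exact (Y.edge_sub e he).trans Set.subset_union_right
  edge_nonempty := by
    rintro e (he | he)
    · exact X.edge_nonempty e he
    · exact Y.edge_nonempty e he

/-- Direct sum of a set of (pairwise disjoint) hypergraphs; the null hypergraph when the
unions fail to be finite.  The direct sum of the empty set is the null hypergraph. -/
noncomputable def bigSum (A : Set (FinHypergraph V)) : FinHypergraph V :=
  if h : (⋃ X ∈ A, X.verts).Finite ∧ (⋃ X ∈ A, X.edges).Finite then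
    { verts := ⋃ X ∈ A, X.verts
      edges := ⋃ X ∈ A, X.edges
      verts_finite := h.1
      edges_finite := h.2
      edge_sub := by
        intro e he
        simp only [Set.mem_iUnion] at he
        obtain ⟨X, hX, heX⟩ := he
        intro v hv
        simp only [Set.mem_iUnion]
        exact ⟨X, hX, X.edge_sub e heX hv⟩
      edge_nonempty := by
        intro e he
        simp only [Set.mem_iUnion] at he
        obtain ⟨X, hX, heX⟩ := he
        exact X.edge_nonempty e heX }
  else Null

/-- The direct difference `X ⊖ Z`: the unique hypergraph `W` vertex disjoint from `Z`
with `X = W ⊕ Z`, when it exists. -/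
noncomputable def dDiff (X Z : FinHypergraph V) : FinHypergraph V :=
  if h : ∃ W : FinHypergraph V, Disjoint W.verts Z.verts ∧ X = dSum W Z then h.choose else X

/-- Two vertices are connected in `X` if there is a walk between them. -/
def Connected (X : FinHypergraph V) (a b : V) : Prop :=
  a ∈ X.verts ∧ Relation.ReflTransGen (fun u w => ∃ e ∈ X.edges, u ∈ e ∧ w ∈ e) a b

/-- `C` is a connected component of `X`: its vertex set is a connectivity class of `X`
and its edges are the edges of `X` lying inside it. -/
def IsComponent (X C : FinHypergraph V) : Prop :=
  (∃ v ∈ X.verts, C.verts = {w | Connected X v w}) ∧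
  C.edges = {e ∈ X.edges | e ⊆ C.verts}

/-- The set `𝒞(X)` of connected components of `X`. -/
def comps (X : FinHypergraph V) : Set (FinHypergraph V) := {C | IsComponent X C}

/-- Component disjointness: `𝒞(X) ∩ 𝒞(Y) = ∅`. -/
def CompDisjoint (X Y : FinHypergraph V) : Prop := comps X ∩ comps Y = ∅

/-- `X ∧ H`: the union (direct sum) of the components of `X` meeting some hyperedge in `H`. -/
noncomputable def wedge (X : FinHypergraph V) (H : Set (Set V)) : FinHypergraph V :=
  bigSum {C ∈ comps X | ∃ f ∈ H, (f ∩ C.verts).Nonempty}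

/-- `𝒮` is component maximal in `𝒳` with `𝒮`-maximal subsets given by `D`. -/
def IsMaximalSubsets (dom S : Set (FinHypergraph V))
    (D : FinHypergraph V → Set (FinHypergraph V)) : Prop :=
  ∀ X ∈ dom,
    D X ⊆ S ∧
    (D X).Pairwise CompDisjoint ∧
    (Null ∈ S → Null ∈ D X) ∧
    (∀ T ∈ D X, comps T ⊆ comps X) ∧
    (∀ s ∈ S, comps s ⊆ comps X → ∃ T ∈ D X, comps s ⊆ comps T)

/-- `𝒮_X := { S ∈ 𝒟_X | V(π(S)) ∩ V(X ⊖ S) = ∅ }`. -/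
noncomputable def SXof (π : FinHypergraph V → FinHypergraph V)
    (D : FinHypergraph V → Set (FinHypergraph V)) (X : FinHypergraph V) : Set (FinHypergraph V) :=
  {s ∈ D X | Disjoint (π s).verts (dDiff X s).verts}

/-- `(𝒳, π, 𝒮)` (with `𝒮`-maximal subsets `D`) is a hypergraph transformation:
nonredundancy, component maximality, and preservation of the direct sum decomposition. -/
def IsHGT (dom : Set (FinHypergraph V)) (π : FinHypergraph V → FinHypergraph V)
    (S : Set (FinHypergraph V)) (D : FinHypergraph V → Set (FinHypergraph V)) : Prop :=
  (∀ s ∈ S, comps s ∩ comps (π s) = ∅) ∧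
  (Null ∈ S → π Null ≠ Null) ∧
  IsMaximalSubsets dom S D ∧
  ∀ X ∈ dom,
    (π '' SXof π D X).Pairwise (fun A B => Disjoint A.verts B.verts) ∧
    Set.InjOn π (SXof π D X) ∧
    π X = dSum (dDiff X (bigSum (SXof π D X))) (bigSum (π '' SXof π D X))

/-- `𝒮'` is upward closed with respect to `𝒮`. -/
def UpwardClosed (S' S : Set (FinHypergraph V)) : Prop :=
  ∀ s ∈ S', ∀ t ∈ S, comps s ⊆ comps t → t ∈ S'

end FinHypergraph

namespace FinHypergraph

variable {V : Type u}

lemma hg_ext {X Y : FinHypergraph V} (hv : X.verts = Y.verts) (he : X.edges = Y.edges) :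
    X = Y := by
  cases X; cases Y; simp_all

lemma connected_mem {X : FinHypergraph V} {a b : V} (h : Connected X a b) : b ∈ X.verts := by
  obtain ⟨ha, h⟩ := h
  induction h with
  | refl => exact ha
  | tail _ hstep ih => obtain ⟨e, he, _, hbe⟩ := hstep; exact X.edge_sub e he hbe

lemma connected_symm {X : FinHypergraph V} {a b : V} (h : Connected X a b) : Connected X b a := by
  refine ⟨connected_mem h, ?_⟩
  have hs : Symmetric (fun u w => ∃ e ∈ X.edges, u ∈ e ∧ w ∈ e) := by
    rintro u w ⟨e, he, h1, h2⟩; exact ⟨e, he, h2, h1⟩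
  exact (haveI : Std.Symm (fun u w => ∃ e ∈ X.edges, u ∈ e ∧ w ∈ e) := ⟨fun _ _ h => hs h⟩; Std.Symm.symm _ _ h.2)

lemma connected_trans {X : FinHypergraph V} {a b c : V} (h1 : Connected X a b)
    (h2 : Connected X b c) : Connected X a c := ⟨h1.1, h1.2.trans h2.2⟩

/-- The connected component of `v` in `X`. -/
noncomputable def compOf (X : FinHypergraph V) (v : V) : FinHypergraph V where
  verts := {w | Connected X v w}
  edges := {e ∈ X.edges | e ⊆ {w | Connected X v w}}
  verts_finite := X.verts_finite.subset fun _ hw => connected_mem hw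
  edges_finite := X.edges_finite.subset fun _ he => he.1
  edge_sub := fun _ he => he.2
  edge_nonempty := fun e he => X.edge_nonempty e he.1

lemma compOf_mem_comps {X : FinHypergraph V} {v : V} (hv : v ∈ X.verts) :
    compOf X v ∈ comps X := ⟨⟨v, hv, rfl⟩, rfl⟩

lemma mem_comps_iff {X C : FinHypergraph V} :
    C ∈ comps X ↔ ∃ v ∈ X.verts, C = compOf X v := by
  constructor
  · rintro ⟨⟨v, hv, hverts⟩, hedges⟩
    exact ⟨v, hv, hg_ext hverts (by rw [hedges, hverts]; rfl)⟩
  · rintro ⟨v, hv, rfl⟩; exact compOf_mem_comps hv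

lemma compOf_eq_of_connected {X : FinHypergraph V} {v w : V} (h : Connected X v w) :
    compOf X v = compOf X w := by
  have hv : {u | Connected X v u} = {u | Connected X w u} := by
    ext u
    exact ⟨fun hu => connected_trans (connected_symm h) hu, fun hu => connected_trans h hu⟩
  exact hg_ext hv (by simp only [compOf, hv])

lemma mem_verts_compOf {X : FinHypergraph V} {v : V} (hv : v ∈ X.verts) :
    v ∈ (compOf X v).verts := ⟨hv, Relation.ReflTransGen.refl⟩

lemma comps_verts_subset {X C : FinHypergraph V} (h : C ∈ comps X) : C.verts ⊆ X.verts := by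
  obtain ⟨v, hv, rfl⟩ := mem_comps_iff.1 h
  exact fun w hw => connected_mem hw

lemma comps_eq_or_disjoint {X C₁ C₂ : FinHypergraph V} (h1 : C₁ ∈ comps X) (h2 : C₂ ∈ comps X) :
    C₁ = C₂ ∨ Disjoint C₁.verts C₂.verts := by
  obtain ⟨v, hv, rfl⟩ := mem_comps_iff.1 h1
  obtain ⟨w, hw, rfl⟩ := mem_comps_iff.1 h2
  by_cases hc : Connected X v w
  · exact Or.inl (compOf_eq_of_connected hc)
  · refine Or.inr (Set.disjoint_left.2 fun u hu hu' => hc ?_)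
    exact connected_trans hu (connected_symm hu')

lemma verts_eq_iUnion (X : FinHypergraph V) : X.verts = ⋃ C ∈ comps X, C.verts := by
  ext v
  constructor
  · intro hv
    exact Set.mem_biUnion (compOf_mem_comps hv) (mem_verts_compOf hv)
  · intro hv
    simp only [Set.mem_iUnion] at hv
    obtain ⟨C, hC, hvC⟩ := hv
    exact comps_verts_subset hC hvC

lemma edge_mem_compOf {X : FinHypergraph V} {e : Set V} (he : e ∈ X.edges) {v : V} (hv : v ∈ e) :
    e ∈ (compOf X v).edges := by
  refine ⟨he, fun w hw => ⟨X.edge_sub e he hv, Relation.ReflTransGen.single ⟨e, he, hv, hw⟩⟩⟩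

lemma edges_eq_iUnion (X : FinHypergraph V) : X.edges = ⋃ C ∈ comps X, C.edges := by
  ext e
  constructor
  · intro he
    obtain ⟨v, hv⟩ := X.edge_nonempty e he
    exact Set.mem_biUnion (compOf_mem_comps (X.edge_sub e he hv)) (edge_mem_compOf he hv)
  · intro he
    simp only [Set.mem_iUnion] at he
    obtain ⟨C, hC, heC⟩ := he
    obtain ⟨v, hv, rfl⟩ := mem_comps_iff.1 hC
    exact heC.1

lemma eq_of_comps_eq {A B : FinHypergraph V} (h : comps A = comps B) : A = B :=
  hg_ext (by rw [verts_eq_iUnion A, verts_eq_iUnion B, h])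
    (by rw [edges_eq_iUnion A, edges_eq_iUnion B, h])

lemma eq_null_of_comps_eq_empty {A : FinHypergraph V} (h : comps A = ∅) : A = Null :=
  hg_ext (by rw [verts_eq_iUnion A, h]; simp [Null])
    (by rw [edges_eq_iUnion A, h]; simp [Null])

lemma bigSum_verts {A : Set (FinHypergraph V)} (hv : (⋃ X ∈ A, X.verts).Finite)
    (he : (⋃ X ∈ A, X.edges).Finite) :
    (bigSum A).verts = ⋃ X ∈ A, X.verts := by
  rw [bigSum, dif_pos ⟨hv, he⟩]

lemma bigSum_edges {A : Set (FinHypergraph V)} (hv : (⋃ X ∈ A, X.verts).Finite)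
    (he : (⋃ X ∈ A, X.edges).Finite) :
    (bigSum A).edges = ⋃ X ∈ A, X.edges := by
  rw [bigSum, dif_pos ⟨hv, he⟩]

lemma dSum_comm (W Z : FinHypergraph V) : dSum W Z = dSum Z W :=
  hg_ext (Set.union_comm _ _) (Set.union_comm _ _)

/-- Uniqueness of the complement in a vertex-disjoint direct sum decomposition. -/
lemma decomp_unique {X Z W₁ W₂ : FinHypergraph V} (h1 : Disjoint W₁.verts Z.verts)
    (e1 : X = dSum W₁ Z) (h2 : Disjoint W₂.verts Z.verts) (e2 : X = dSum W₂ Z) :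
    W₁ = W₂ := by
  have hv : ∀ (W : FinHypergraph V), Disjoint W.verts Z.verts → X = dSum W Z →
      W.verts = X.verts \ Z.verts := by
    rintro W hd rfl
    show W.verts = (W.verts ∪ Z.verts) \ Z.verts
    rw [Set.union_diff_cancel_right (Set.disjoint_iff.1 hd)]
  have he : ∀ (W : FinHypergraph V), Disjoint W.verts Z.verts → X = dSum W Z →
      W.edges = {e ∈ X.edges | e ⊆ X.verts \ Z.verts} := by
    rintro W hd rfl
    rw [← hv W hd rfl]
    ext e
    constructor
    · intro he
      exact ⟨Or.inl he, W.edge_sub e he⟩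
    · rintro ⟨(he | he), hsub⟩
      · exact he
      · obtain ⟨x, hx⟩ := Z.edge_nonempty e he
        exact absurd (Z.edge_sub e he hx) (Set.disjoint_left.1 hd (hsub hx))
  exact hg_ext ((hv W₁ h1 e1).trans (hv W₂ h2 e2).symm)
    ((he W₁ h1 e1).trans (he W₂ h2 e2).symm)

lemma dDiff_eq {X Z W : FinHypergraph V} (hd : Disjoint W.verts Z.verts) (he : X = dSum W Z) :
    dDiff X Z = W := by
  have hex : ∃ W' : FinHypergraph V, Disjoint W'.verts Z.verts ∧ X = dSum W' Z := ⟨W, hd, he⟩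
  rw [dDiff, dif_pos hex]
  exact decomp_unique hex.choose_spec.1 hex.choose_spec.2 hd he

lemma connected_dSum_left {W Z : FinHypergraph V} (h : Disjoint W.verts Z.verts) {v w : V}
    (hv : v ∈ W.verts) : Connected (dSum W Z) v w ↔ Connected W v w := by
  constructor
  · rintro ⟨-, hw⟩
    refine ⟨hv, ?_⟩
    induction hw with
    | refl => exact Relation.ReflTransGen.refl
    | @tail b c _ hstep ih =>
      obtain ⟨e, he, hae, hbe⟩ := hstep
      have hb : b ∈ W.verts := connected_mem ⟨hv, ih⟩
      rcases he with heW | heZ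
      · exact ih.tail ⟨e, heW, hae, hbe⟩
      · exact absurd (Z.edge_sub e heZ hae) (Set.disjoint_left.1 h hb)
  · rintro ⟨-, hw⟩
    refine ⟨Or.inl hv, Relation.ReflTransGen.mono ?_ _ _ hw⟩
    rintro a b ⟨e, he, h1, h2⟩
    exact ⟨e, Or.inl he, h1, h2⟩

lemma comps_dSum_subset_left {W Z : FinHypergraph V} (h : Disjoint W.verts Z.verts) :
    comps W ⊆ comps (dSum W Z) := by
  intro C hC
  obtain ⟨v, hv, rfl⟩ := mem_comps_iff.1 hC
  have hverts : (compOf W v).verts = {w | Connected (dSum W Z) v w} := by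
    ext w; exact (connected_dSum_left h hv).symm
  have hsubW : (compOf W v).verts ⊆ W.verts := comps_verts_subset hC
  refine ⟨⟨v, Or.inl hv, hverts⟩, ?_⟩
  show (compOf W v).edges = {e ∈ W.edges ∪ Z.edges | e ⊆ (compOf W v).verts}
  ext e
  constructor
  · rintro ⟨he, hsub⟩; exact ⟨Or.inl he, hsub⟩
  · rintro ⟨(he | he), hsub⟩
    · exact ⟨he, hsub⟩
    · obtain ⟨x, hx⟩ := Z.edge_nonempty e he
      exact absurd (Z.edge_sub e he hx) (Set.disjoint_left.1 h (hsubW (hsub hx)))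

lemma comps_dSum {W Z : FinHypergraph V} (h : Disjoint W.verts Z.verts) :
    comps (dSum W Z) = comps W ∪ comps Z := by
  apply Set.Subset.antisymm
  · intro C hC
    obtain ⟨v, hv, rfl⟩ := mem_comps_iff.1 hC
    rcases hv with hv | hv
    · left
      have hverts : {w | Connected (dSum W Z) v w} = (compOf W v).verts := by
        ext w; exact connected_dSum_left h hv
      have hC' : compOf W v ∈ comps W := compOf_mem_comps hv
      have : compOf (dSum W Z) v = compOf W v := by
        refine hg_ext hverts ?_
        show {e ∈ W.edges ∪ Z.edges | e ⊆ {w | Connected (dSum W Z) v w}} = (compOf W v).edges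
        rw [hverts]
        ext e
        constructor
        · rintro ⟨(he | he), hsub⟩
          · exact ⟨he, hsub⟩
          · obtain ⟨x, hx⟩ := Z.edge_nonempty e he
            exact absurd (Z.edge_sub e he hx)
              (Set.disjoint_left.1 h (comps_verts_subset hC' (hsub hx)))
        · rintro ⟨he, hsub⟩; exact ⟨Or.inl he, hsub⟩
      rw [this]; exact hC'
    · right
      have hcomm : dSum W Z = dSum Z W := dSum_comm W Z
      have hC2 : compOf (dSum Z W) v ∈ comps (dSum Z W) := compOf_mem_comps (Or.inl hv)
      have := comps_dSum_subset_left h.symm (Z := W)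
      -- redo the left argument with roles swapped
      have hverts : {w | Connected (dSum W Z) v w} = (compOf Z v).verts := by
        ext w
        rw [hcomm]
        exact connected_dSum_left h.symm hv
      have hC' : compOf Z v ∈ comps Z := compOf_mem_comps hv
      have : compOf (dSum W Z) v = compOf Z v := by
        refine hg_ext hverts ?_
        show {e ∈ W.edges ∪ Z.edges | e ⊆ {w | Connected (dSum W Z) v w}} = (compOf Z v).edges
        rw [hverts]
        ext e
        constructor
        · rintro ⟨(he | he), hsub⟩
          · obtain ⟨x, hx⟩ := W.edge_nonempty e he
            exact absurd (W.edge_sub e he hx)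
              (Set.disjoint_left.1 h.symm (comps_verts_subset hC' (hsub hx)))
          · exact ⟨he, hsub⟩
        · rintro ⟨he, hsub⟩; exact ⟨Or.inr he, hsub⟩
      rw [this]; exact hC'
  · rintro C (hC | hC)
    · exact comps_dSum_subset_left h hC
    · rw [dSum_comm]; exact comps_dSum_subset_left h.symm hC

/-- If `comps s ⊆ comps X` then `X` decomposes as `(X ⊖ s) ⊕ s`. -/
lemma dDiff_spec {X s : FinHypergraph V} (h : comps s ⊆ comps X) :
    Disjoint (dDiff X s).verts s.verts ∧ X = dSum (dDiff X s) s := by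
  set A : Set (FinHypergraph V) := comps X \ comps s with hA
  have hvfin : (⋃ C ∈ A, C.verts).Finite :=
    X.verts_finite.subset (by
      intro v hv
      simp only [Set.mem_iUnion] at hv
      obtain ⟨C, hC, hvC⟩ := hv
      exact comps_verts_subset hC.1 hvC)
  have hefin : (⋃ C ∈ A, C.edges).Finite :=
    X.edges_finite.subset (by
      intro e he
      simp only [Set.mem_iUnion] at he
      obtain ⟨C, hC, heC⟩ := he
      rw [edges_eq_iUnion X]
      exact Set.mem_biUnion hC.1 heC)
  have hWv : (bigSum A).verts = ⋃ C ∈ A, C.verts := bigSum_verts hvfin hefin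
  have hWe : (bigSum A).edges = ⋃ C ∈ A, C.edges := bigSum_edges hvfin hefin
  have hdisj : Disjoint (bigSum A).verts s.verts := by
    rw [hWv, verts_eq_iUnion s]
    simp only [Set.disjoint_iUnion_left, Set.disjoint_iUnion_right]
    intro C1 hC1 C2 hC2
    first
    | { rcases comps_eq_or_disjoint hC1.1 (h hC2) with rfl | hd
        · exact absurd hC2 hC1.2
        · first | exact hd | exact hd.symm }
    | { rcases comps_eq_or_disjoint hC2.1 (h hC1) with rfl | hd
        · exact absurd hC1 hC2.2
        · first | exact hd | exact hd.symm }
  have hsum : X = dSum (bigSum A) s := by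
    refine hg_ext ?_ ?_
    · show X.verts = (bigSum A).verts ∪ s.verts
      rw [hWv, verts_eq_iUnion X, verts_eq_iUnion s]
      ext v
      simp only [Set.mem_union, Set.mem_iUnion]
      constructor
      · rintro ⟨C, hC, hv⟩
        by_cases hCs : C ∈ comps s
        · exact Or.inr ⟨C, hCs, hv⟩
        · exact Or.inl ⟨C, ⟨hC, hCs⟩, hv⟩
      · rintro (⟨C, hC, hv⟩ | ⟨C, hC, hv⟩)
        · exact ⟨C, hC.1, hv⟩
        · exact ⟨C, h hC, hv⟩
    · show X.edges = (bigSum A).edges ∪ s.edges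
      rw [hWe, edges_eq_iUnion X, edges_eq_iUnion s]
      ext e
      simp only [Set.mem_union, Set.mem_iUnion]
      constructor
      · rintro ⟨C, hC, he⟩
        by_cases hCs : C ∈ comps s
        · exact Or.inr ⟨C, hCs, he⟩
        · exact Or.inl ⟨C, ⟨hC, hCs⟩, he⟩
      · rintro (⟨C, hC, he⟩ | ⟨C, hC, he⟩)
        · exact ⟨C, hC.1, he⟩
        · exact ⟨C, h hC, he⟩
  rw [dDiff_eq hdisj hsum]
  exact ⟨hdisj, hsum⟩

lemma dDiff_verts {X s : FinHypergraph V} (h : comps s ⊆ comps X) :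
    (dDiff X s).verts = X.verts \ s.verts := by
  obtain ⟨hd, hsum⟩ := dDiff_spec h
  have hv : X.verts = (dDiff X s).verts ∪ s.verts := congrArg verts hsum
  rw [hv, Set.union_diff_cancel_right (Set.disjoint_iff.1 hd)]

lemma comps_decomp {X s : FinHypergraph V} (h : comps s ⊆ comps X) :
    comps X = comps (dDiff X s) ∪ comps s := by
  obtain ⟨hd, hsum⟩ := dDiff_spec h
  conv_lhs => rw [hsum]
  exact comps_dSum hd

/-- Core abstract step: if membership-comps conditions transfer between `A` and `B`,
then `D A ⊆ D B`. -/
lemma D_subset_D {dom S : Set (FinHypergraph V)} {π : FinHypergraph V → FinHypergraph V}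
    {D : FinHypergraph V → Set (FinHypergraph V)} (hT : IsHGT dom π S D)
    {A B : FinHypergraph V} (hA : A ∈ dom) (hB : B ∈ dom)
    (hiff : ∀ T ∈ S, (comps T ⊆ comps A ↔ comps T ⊆ comps B)) :
    D A ⊆ D B := by
  obtain ⟨-, -, hmax, -⟩ := hT
  obtain ⟨hDA_S, hDA_pair, hDA_null, hDA_sub, hDA_max⟩ := hmax A hA
  obtain ⟨hDB_S, hDB_pair, hDB_null, hDB_sub, hDB_max⟩ := hmax B hB
  intro T hTA
  have hTS : T ∈ S := hDA_S hTA
  have hTB : comps T ⊆ comps B := (hiff T hTS).1 (hDA_sub T hTA)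
  obtain ⟨T', hT'B, hTT'⟩ := hDB_max T hTS hTB
  have hT'S : T' ∈ S := hDB_S hT'B
  have hT'A : comps T' ⊆ comps A := (hiff T' hT'S).2 (hDB_sub T' hT'B)
  obtain ⟨T'', hT''A, hT'T''⟩ := hDA_max T' hT'S hT'A
  by_cases hTnull : comps T = ∅
  · have h0 := eq_null_of_comps_eq_empty hTnull
    rw [h0]
    exact hDB_null (h0 ▸ hTS)
  · have hTeq : T = T'' := by
      by_contra hne
      obtain ⟨c, hc⟩ := Set.nonempty_iff_ne_empty.2 hTnull
      have hmem : c ∈ comps T ∩ comps T'' := ⟨hc, hT'T'' (hTT' hc)⟩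
      rw [hDA_pair hTA hT''A hne] at hmem
      exact hmem
    have : comps T = comps T' := Set.Subset.antisymm hTT' (hTeq ▸ hT'T'')
    rw [eq_of_comps_eq this]
    exact hT'B

end FinHypergraph


open FinHypergraph

theorem stmt10 {V : Type u} (dom S : Set (FinHypergraph V))
    (π : FinHypergraph V → FinHypergraph V) (D : FinHypergraph V → Set (FinHypergraph V))
    (hsub : S ⊆ dom) (hT : IsHGT dom π S D)
    (X X' X'' : FinHypergraph V) (hX : X ∈ dom)
    (hX' : comps X' ⊆ comps X)
    (hX'' : Disjoint X''.verts (dDiff X X').verts)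
    (hY : dSum (dDiff X X') X'' ∈ dom)
    (hScomp : ∀ s ∈ S, CompDisjoint s X' ∧ CompDisjoint s X'')
    (hSvert : ∀ s ∈ S, Disjoint (π s).verts X'.verts ∧ Disjoint (π s).verts X''.verts) :
    D (dSum (dDiff X X') X'') = D X ∧
    SXof π D (dSum (dDiff X X') X'') = SXof π D X := by
  set W := dDiff X X' with hWdef
  obtain ⟨hWd, hWsum⟩ := dDiff_spec hX'
  have hcompX : comps X = comps W ∪ comps X' := comps_decomp hX'
  have hcompY : comps (dSum W X'') = comps W ∪ comps X'' := comps_dSum hX''.symm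
  have hiff : ∀ T ∈ S, (comps T ⊆ comps (dSum W X'') ↔ comps T ⊆ comps X) := by
    intro T hTS
    obtain ⟨hd1, hd2⟩ := hScomp T hTS
    constructor
    · intro h
      rw [hcompY] at h
      rw [hcompX]
      intro c hc
      rcases h hc with h' | h'
      · exact Or.inl h'
      · exfalso
        have hm : c ∈ comps T ∩ comps X'' := ⟨hc, h'⟩
        rw [hd2] at hm
        exact hm
    · intro h
      rw [hcompX] at h
      rw [hcompY]
      intro c hc
      rcases h hc with h' | h'
      · exact Or.inl h'
      · exfalso
        have hm : c ∈ comps T ∩ comps X' := ⟨hc, h'⟩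
        rw [hd1] at hm
        exact hm
  have hDeq : D (dSum W X'') = D X :=
    Set.Subset.antisymm (D_subset_D hT hY hX hiff)
      (D_subset_D hT hX hY fun T hTS => (hiff T hTS).symm)
  refine ⟨hDeq, ?_⟩
  ext s
  simp only [SXof, Set.mem_setOf_eq, hDeq]
  refine and_congr_right fun hs => ?_
  have hmax := hT.2.2.1 X hX
  have hsS : s ∈ S := hmax.1 hs
  have hscX : comps s ⊆ comps X := hmax.2.2.2.1 s hs
  have hscY : comps s ⊆ comps (dSum W X'') := (hiff s hsS).2 hscX
  rw [dDiff_verts hscX, dDiff_verts hscY]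
  obtain ⟨hv1, hv2⟩ := hSvert s hsS
  have hXverts : X.verts = W.verts ∪ X'.verts := congrArg verts hWsum
  have hYverts : (dSum W X'').verts = W.verts ∪ X''.verts := rfl
  constructor
  · intro h
    have hsub : X.verts \ s.verts ⊆ ((dSum W X'').verts \ s.verts) ∪ X'.verts := by
      intro x hx
      rw [hXverts] at hx
      rcases hx.1 with hxW | hxX'
      · exact Or.inl ⟨Or.inl hxW, hx.2⟩
      · exact Or.inr hxX'
    exact (h.union_right hv1).mono_right hsub
  · intro h
    have hsub : (dSum W X'').verts \ s.verts ⊆ (X.verts \ s.verts) ∪ X''.verts := by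
      intro x hx
      rcases hx.1 with hxW | hxX''
      · exact Or.inl ⟨hXverts ▸ Or.inl hxW, hx.2⟩
      · exact Or.inr hxX''
    exact (h.union_right hv2).mono_right hsub
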